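/- Let D ⊂ ℂ^n be a bounded, strongly ℂ-linearly convex C^{1,1} domain and K(w,z) = Δ(w,z)^{-n} with Δ(w,z) = ⟨∂ρ(w), w−z⟩. Then for w₁, w₂, z ∈ bD with d(w₁,z) ≥ c₁ d(w₁,w₂) (c₁ large enough): |K(w₁,z) − K(w₂,z)| ≲ d(w₁,z)^{-2n} · d(w₁,w₂)/d(w₁,z), and also |K(w,z)| ≲ d(w,z)^{-2n}. -/

import Mathlib

/-- The Leray pairing `Δ(w,z) = ⟨∂ρ(w), w−z⟩`. -/
noncomputable def cplxPair {n : ℕ}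
    (pc : EuclideanSpace ℂ (Fin n) → EuclideanSpace ℂ (Fin n))
    (w z : EuclideanSpace ℂ (Fin n)) : ℂ :=
  ∑ j, pc w j * (w j - z j)

/-- The quasi-distance `d(w,z) = |Δ(w,z)|^{1/2}`. -/
noncomputable def lerayDist {n : ℕ}
    (pc : EuclideanSpace ℂ (Fin n) → EuclideanSpace ℂ (Fin n))
    (w z : EuclideanSpace ℂ (Fin n)) : ℝ :=
  Real.sqrt ‖cplxPair pc w z‖

set_option maxHeartbeats 1000000

open Finset in
lemma abs_sum_mul_le' {n : ℕ} (a b : EuclideanSpace ℂ (Fin n)) :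
    ‖∑ j, a j * b j‖ ≤ ‖a‖ * ‖b‖ := by
  calc ‖∑ j, a j * b j‖ ≤ ∑ j, ‖a j * b j‖ :=
        norm_sum_le _ _
    _ = ∑ j, ‖a j‖ * ‖b j‖ := by simp [map_mul]
    _ ≤ Real.sqrt (∑ j, ‖a j‖ ^ 2) * Real.sqrt (∑ j, ‖b j‖ ^ 2) :=
        Real.sum_mul_le_sqrt_mul_sqrt _ _ _
    _ = ‖a‖ * ‖b‖ := by
        rw [EuclideanSpace.norm_eq, EuclideanSpace.norm_eq]

open Finset in
lemma abs_pow_sub_pow_le' (x y : ℂ) (n : ℕ) (M : ℝ) (hx : ‖x‖ ≤ M)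
    (hy : ‖y‖ ≤ M) :
    ‖x ^ n - y ^ n‖ ≤ n * M ^ (n - 1) * ‖x - y‖ := by
  have hM : 0 ≤ M := le_trans (norm_nonneg x) hx
  rw [← geom_sum₂_mul x y n, norm_mul]
  have hsum : ‖∑ i ∈ range n, x ^ i * y ^ (n - 1 - i)‖ ≤ n * M ^ (n - 1) := by
    calc ‖∑ i ∈ range n, x ^ i * y ^ (n - 1 - i)‖
        ≤ ∑ i ∈ range n, ‖x ^ i * y ^ (n - 1 - i)‖ := norm_sum_le _ _
      _ ≤ ∑ _i ∈ range n, M ^ (n - 1) := by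
          apply Finset.sum_le_sum
          intro i hi
          rw [norm_mul, norm_pow, norm_pow]
          calc ‖x‖ ^ i * ‖y‖ ^ (n - 1 - i)
              ≤ M ^ i * M ^ (n - 1 - i) := by
                apply mul_le_mul (pow_le_pow_left₀ (norm_nonneg x) hx i)
                  (pow_le_pow_left₀ (norm_nonneg y) hy _) (by positivity) (by positivity)
            _ = M ^ (i + (n - 1 - i)) := (pow_add M i _).symm
            _ = M ^ (n - 1) := by
                congr 1
                have := Finset.mem_range.mp hi
                omega
      _ = n * M ^ (n - 1) := by rw [Finset.sum_const, card_range, nsmul_eq_mul]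
  exact mul_le_mul_of_nonneg_right hsum (norm_nonneg _)

lemma rpow_neg_two_n (d : ℝ) (hd : 0 ≤ d) (n : ℕ) :
    d ^ (-(2 * (n : ℝ))) = (d ^ (2 * n))⁻¹ := by
  rw [show -(2 * (n : ℝ)) = -((2 * n : ℕ) : ℝ) by push_cast; ring,
    Real.rpow_neg hd, Real.rpow_natCast]

/-- Size and regularity estimates for the Cauchy–Leray kernel `K(w,z) = Δ(w,z)^{-n}`:
`|K(w,z)| ≲ d(w,z)^{-2n}` and, for `d(w₁,z) ≥ c₁ d(w₁,w₂)` with `c₁` large enough,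
`|K(w₁,z) − K(w₂,z)| ≲ d(w₁,z)^{-2n}·d(w₁,w₂)/d(w₁,z)`. -/
theorem cauchy_leray_kernel_estimates (n : ℕ) (hn : 2 ≤ n)
    (ρ : EuclideanSpace ℂ (Fin n) → ℝ)
    (D : Set (EuclideanSpace ℂ (Fin n)))
    (hD : D = {z | ρ z < 0}) (hbdd : Bornology.IsBounded D)
    (hρ1 : ContDiff ℝ 1 ρ)
    (pc : EuclideanSpace ℂ (Fin n) → EuclideanSpace ℂ (Fin n))
    (hpc : ∀ w v, fderiv ℝ ρ w v = 2 * (∑ j, pc w j * v j).re)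
    (Kpc : NNReal) (hpcLip : LipschitzWith Kpc pc)
    (hgrad : ∀ w, ρ w = 0 → fderiv ℝ ρ w ≠ 0)
    (c₀ : ℝ) (hc₀ : 0 < c₀)
    (hconv : ∀ z, ρ z ≤ 0 → ∀ w, ρ w = 0 →
      c₀ * ‖w - z‖ ^ 2 ≤ ‖cplxPair pc w z‖) :
    ∃ C c₁ : ℝ, 0 < C ∧ 1 ≤ c₁ ∧
      (∀ w z, ρ w = 0 → ρ z = 0 → w ≠ z →
        ‖cplxPair pc w z ^ (-(n : ℤ))‖ ≤ C * lerayDist pc w z ^ (-(2 * (n : ℝ)))) ∧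
      (∀ w₁ w₂ z, ρ w₁ = 0 → ρ w₂ = 0 → ρ z = 0 →
        c₁ * lerayDist pc w₁ w₂ ≤ lerayDist pc w₁ z →
        ‖cplxPair pc w₁ z ^ (-(n : ℤ)) - cplxPair pc w₂ z ^ (-(n : ℤ))‖ ≤
          C * lerayDist pc w₁ z ^ (-(2 * (n : ℝ))) *
            (lerayDist pc w₁ w₂ / lerayDist pc w₁ z)) := by
  set K : ℝ := (Kpc : ℝ) with hKdef
  have hK : 0 ≤ K := Kpc.coe_nonneg
  set B : ℝ := 1 + K / c₀ with hBdef
  have hB1 : 1 ≤ B := by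
    have h : 0 ≤ K / c₀ := div_nonneg hK hc₀.le
    rw [hBdef]; linarith
  have hB0 : 0 < B := lt_of_lt_of_le one_pos hB1
  have hn1 : (1 : ℝ) ≤ (n : ℝ) := by exact_mod_cast Nat.one_le_of_lt hn
  set C : ℝ := B * n * 2 ^ n * (4 / 3) ^ n with hCdef
  have h2n : (1 : ℝ) ≤ 2 ^ n := one_le_pow₀ one_le_two
  have h43n : (1 : ℝ) ≤ (4 / 3 : ℝ) ^ n := one_le_pow₀ (by norm_num)
  have hC1 : 1 ≤ C := by
    calc (1 : ℝ) = 1 * 1 * 1 * 1 := by ring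
      _ ≤ B * n * 2 ^ n * (4 / 3) ^ n := by gcongr
  have hC0 : 0 < C := lt_of_lt_of_le one_pos hC1
  -- basic facts about lerayDist
  have hdsq : ∀ w z, (lerayDist pc w z) ^ 2 = ‖cplxPair pc w z‖ := fun w z =>
    Real.sq_sqrt (norm_nonneg _)
  have hdnn : ∀ w z, 0 ≤ lerayDist pc w z := fun w z => Real.sqrt_nonneg _
  have hnormle : ∀ w z, ρ w = 0 → ρ z = 0 →
      Real.sqrt c₀ * ‖w - z‖ ≤ lerayDist pc w z := by
    intro w z hw hz
    have h := hconv z (le_of_eq hz) w hw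
    have : Real.sqrt (c₀ * ‖w - z‖ ^ 2) ≤ Real.sqrt (‖cplxPair pc w z‖) :=
      Real.sqrt_le_sqrt h
    calc Real.sqrt c₀ * ‖w - z‖ = Real.sqrt c₀ * Real.sqrt (‖w - z‖ ^ 2) := by
          rw [Real.sqrt_sq (norm_nonneg _)]
      _ = Real.sqrt (c₀ * ‖w - z‖ ^ 2) := (Real.sqrt_mul hc₀.le _).symm
      _ ≤ lerayDist pc w z := this
  refine ⟨C, 8 * B, hC0, by linarith, ?_, ?_⟩
  · -- size estimate
    intro w z hw hz hne
    have habs : 0 < ‖cplxPair pc w z‖ := by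
      have h := hconv z (le_of_eq hz) w hw
      have hwz : 0 < ‖w - z‖ := by
        rw [norm_pos_iff, sub_ne_zero]; exact hne
      nlinarith [mul_pos hc₀ (pow_pos hwz 2)]
    have hΔ : cplxPair pc w z ≠ 0 := by
      intro h; rw [h] at habs; simp at habs
    have hrw : lerayDist pc w z ^ (-(2 * (n : ℝ))) =
        (‖cplxPair pc w z‖ ^ n)⁻¹ := by
      rw [rpow_neg_two_n _ (hdnn w z), pow_mul, hdsq]
    rw [hrw, zpow_neg, zpow_natCast, norm_inv, norm_pow]
    exact le_mul_of_one_le_left (by positivity) hC1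
  · -- the difference estimate
    intro w₁ w₂ z hw₁ hw₂ hz hfar
    set e := lerayDist pc w₁ w₂ with hedef
    set d := lerayDist pc w₁ z with hddef
    have he0 : 0 ≤ e := hdnn _ _
    have hd0 : 0 ≤ d := hdnn _ _
    rcases eq_or_lt_of_le hd0 with hd | hd
    · -- degenerate case : d = 0, hence e = 0, hence w₂ = w₁
      have he : e = 0 := by
        have hBe : 0 ≤ (B - 1) * e := mul_nonneg (by linarith) he0
        nlinarith
      have hww : w₁ = w₂ := by
        have h1 : ‖cplxPair pc w₁ w₂‖ = 0 := by
          rw [← hdsq w₁ w₂, ← hedef, he]; ring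
        have h2 := hconv w₂ (le_of_eq hw₂) w₁ hw₁
        have h3 : ‖w₁ - w₂‖ ^ 2 = 0 := by nlinarith [sq_nonneg ‖w₁ - w₂‖]
        have h4 : ‖w₁ - w₂‖ = 0 := by
          exact (pow_eq_zero_iff two_ne_zero).mp h3
        exact sub_eq_zero.mp (norm_eq_zero.mp h4)
      rw [hww, sub_self, norm_zero]
      positivity
    · -- main case : d > 0
      set Δ₁ := cplxPair pc w₁ z with hΔ₁def
      set Δ₂ := cplxPair pc w₂ z with hΔ₂def
      set a := ‖Δ₁‖ with hadef
      set b := ‖Δ₂‖ with hbdef2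
      have had : a = d ^ 2 := (hdsq w₁ z).symm
      have ha0 : 0 < a := by rw [had]; positivity
      -- the key intermediate estimate
      have hkey : ‖Δ₁ - Δ₂‖ ≤ B * (e * d + e * e) := by
        have hsplit : Δ₁ - Δ₂ = (∑ j, (pc w₁ - pc w₂) j * (w₁ j - z j)) +
            (∑ j, pc w₂ j * (w₁ j - w₂ j)) := by
          rw [hΔ₁def, hΔ₂def]
          simp only [cplxPair, ← Finset.sum_add_distrib, ← Finset.sum_sub_distrib]
          apply Finset.sum_congr rfl
          intro j _
          have : (pc w₁ - pc w₂) j = pc w₁ j - pc w₂ j := rfl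
          rw [this]; ring
        have hS1 : ‖∑ j, (pc w₁ - pc w₂) j * (w₁ j - z j)‖ ≤
            K * ‖w₁ - w₂‖ * ‖w₁ - z‖ := by
          have h1 : ‖∑ j, (pc w₁ - pc w₂) j * ((w₁ - z) j)‖ ≤
              ‖pc w₁ - pc w₂‖ * ‖w₁ - z‖ := abs_sum_mul_le' _ _
          have hlip : ‖pc w₁ - pc w₂‖ ≤ K * ‖w₁ - w₂‖ := by
            have := hpcLip.dist_le_mul w₁ w₂
            rwa [dist_eq_norm, dist_eq_norm] at this
          have h2 : ∀ j, ((w₁ - z : EuclideanSpace ℂ (Fin n)) j) = w₁ j - z j := fun j => rfl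
          simp only [h2] at h1
          calc ‖∑ j, (pc w₁ - pc w₂) j * (w₁ j - z j)‖ ≤
              ‖pc w₁ - pc w₂‖ * ‖w₁ - z‖ := h1
            _ ≤ K * ‖w₁ - w₂‖ * ‖w₁ - z‖ :=
                mul_le_mul_of_nonneg_right hlip (norm_nonneg _)
        have hS2 : ‖∑ j, pc w₂ j * (w₁ j - w₂ j)‖ ≤
            K * ‖w₁ - w₂‖ * ‖w₁ - w₂‖ + e * e := by
          have hid : (∑ j, pc w₂ j * (w₁ j - w₂ j)) =
              (∑ j, (pc w₂ - pc w₁) j * (w₁ j - w₂ j)) + cplxPair pc w₁ w₂ := by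
            simp only [cplxPair, ← Finset.sum_add_distrib]
            apply Finset.sum_congr rfl
            intro j _
            have : (pc w₂ - pc w₁) j = pc w₂ j - pc w₁ j := rfl
            rw [this]; ring
          rw [hid]
          have h1 : ‖∑ j, (pc w₂ - pc w₁) j * ((w₁ - w₂) j)‖ ≤
              ‖pc w₂ - pc w₁‖ * ‖w₁ - w₂‖ := abs_sum_mul_le' _ _
          have h2 : ∀ j, ((w₁ - w₂ : EuclideanSpace ℂ (Fin n)) j) = w₁ j - w₂ j := fun j => rfl
          simp only [h2] at h1
          have hlip : ‖pc w₂ - pc w₁‖ ≤ K * ‖w₁ - w₂‖ := by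
            have := hpcLip.dist_le_mul w₂ w₁
            rw [dist_eq_norm, dist_eq_norm, norm_sub_rev w₂ w₁] at this
            exact this
          have he2 : ‖cplxPair pc w₁ w₂‖ = e * e := by
            rw [← hdsq w₁ w₂, sq]
          calc ‖(∑ j, (pc w₂ - pc w₁) j * (w₁ j - w₂ j)) + cplxPair pc w₁ w₂‖
              ≤ ‖∑ j, (pc w₂ - pc w₁) j * (w₁ j - w₂ j)‖ +
                ‖cplxPair pc w₁ w₂‖ := norm_add_le _ _
            _ ≤ ‖pc w₂ - pc w₁‖ * ‖w₁ - w₂‖ + e * e := by rw [he2]; linarith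
            _ ≤ K * ‖w₁ - w₂‖ * ‖w₁ - w₂‖ + e * e := by
                have := mul_le_mul_of_nonneg_right hlip (norm_nonneg (w₁ - w₂))
                linarith
        -- combine
        have htri : ‖Δ₁ - Δ₂‖ ≤
            K * ‖w₁ - w₂‖ * ‖w₁ - z‖ + (K * ‖w₁ - w₂‖ * ‖w₁ - w₂‖ + e * e) := by
          rw [hsplit]
          calc ‖(∑ j, (pc w₁ - pc w₂) j * (w₁ j - z j)) +
                ∑ j, pc w₂ j * (w₁ j - w₂ j)‖
              ≤ ‖∑ j, (pc w₁ - pc w₂) j * (w₁ j - z j)‖ +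
                ‖∑ j, pc w₂ j * (w₁ j - w₂ j)‖ := norm_add_le _ _
            _ ≤ _ := add_le_add hS1 hS2
        have hnrm1 : Real.sqrt c₀ * ‖w₁ - w₂‖ ≤ e := hnormle w₁ w₂ hw₁ hw₂
        have hnrm2 : Real.sqrt c₀ * ‖w₁ - z‖ ≤ d := hnormle w₁ z hw₁ hz
        have hsq : Real.sqrt c₀ * Real.sqrt c₀ = c₀ := Real.mul_self_sqrt hc₀.le
        have hs0 : 0 ≤ Real.sqrt c₀ := Real.sqrt_nonneg _
        have hx0 : 0 ≤ ‖w₁ - w₂‖ := norm_nonneg _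
        have hy0 : 0 ≤ ‖w₁ - z‖ := norm_nonneg _
        have hp1 : c₀ * (‖w₁ - w₂‖ * ‖w₁ - z‖) ≤ e * d := by
          have h := mul_le_mul hnrm1 hnrm2 (by positivity) he0
          calc c₀ * (‖w₁ - w₂‖ * ‖w₁ - z‖)
              = Real.sqrt c₀ * ‖w₁ - w₂‖ * (Real.sqrt c₀ * ‖w₁ - z‖) := by
                linear_combination (-(‖w₁ - w₂‖ * ‖w₁ - z‖)) * hsq
            _ ≤ e * d := h
        have hp2 : c₀ * (‖w₁ - w₂‖ * ‖w₁ - w₂‖) ≤ e * e := by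
          have h := mul_le_mul hnrm1 hnrm1 (by positivity) he0
          calc c₀ * (‖w₁ - w₂‖ * ‖w₁ - w₂‖)
              = Real.sqrt c₀ * ‖w₁ - w₂‖ * (Real.sqrt c₀ * ‖w₁ - w₂‖) := by
                linear_combination (-(‖w₁ - w₂‖ * ‖w₁ - w₂‖)) * hsq
            _ ≤ e * e := h
        have hq1 : K * (‖w₁ - w₂‖ * ‖w₁ - z‖) ≤ K / c₀ * (e * d) := by
          rw [div_mul_eq_mul_div, le_div_iff₀ hc₀]
          calc K * (‖w₁ - w₂‖ * ‖w₁ - z‖) * c₀ = K * (c₀ * (‖w₁ - w₂‖ * ‖w₁ - z‖)) := by ring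
            _ ≤ K * (e * d) := mul_le_mul_of_nonneg_left hp1 hK
        have hq2 : K * (‖w₁ - w₂‖ * ‖w₁ - w₂‖) ≤ K / c₀ * (e * e) := by
          rw [div_mul_eq_mul_div, le_div_iff₀ hc₀]
          calc K * (‖w₁ - w₂‖ * ‖w₁ - w₂‖) * c₀ = K * (c₀ * (‖w₁ - w₂‖ * ‖w₁ - w₂‖)) := by ring
            _ ≤ K * (e * e) := mul_le_mul_of_nonneg_left hp2 hK
        have hed : 0 ≤ e * d := mul_nonneg he0 hd0
        rw [hBdef]
        nlinarith [htri, hq1, hq2]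
      -- consequences of hkey
      have hedle : e ≤ d := by
        have hBe : 0 ≤ (B - 1) * e := mul_nonneg (by linarith) he0
        nlinarith
      have hδ : ‖Δ₁ - Δ₂‖ ≤ 2 * B * (e * d) := by
        have h1 : 0 ≤ B * e * (d - e) := by
          apply mul_nonneg (mul_nonneg hB0.le he0); linarith
        nlinarith
      have hδa : ‖Δ₁ - Δ₂‖ ≤ a / 4 := by
        have h1 := mul_le_mul_of_nonneg_right hfar hd0
        nlinarith
      have hba1 : 3 / 4 * a ≤ b := by
        have ht : a ≤ b + ‖Δ₁ - Δ₂‖ := by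
          calc a = ‖Δ₂ + (Δ₁ - Δ₂)‖ := by rw [hadef]; congr 1; ring
            _ ≤ b + ‖Δ₁ - Δ₂‖ := norm_add_le _ _
        linarith
      have hb0 : 0 < b := by linarith
      have hba2 : a ≤ 2 * a := by linarith
      have hΔ₁ne : Δ₁ ≠ 0 := by
        intro h; rw [h, norm_zero] at hadef; linarith
      have hΔ₂ne : Δ₂ ≠ 0 := by
        intro h; rw [h, norm_zero] at hbdef2; linarith
      have hbb2 : b ≤ 2 * a := by
        have ht : b ≤ a + ‖Δ₁ - Δ₂‖ := by
          calc b = ‖Δ₁ + (Δ₂ - Δ₁)‖ := by rw [hbdef2]; congr 1; ring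
            _ ≤ a + ‖Δ₂ - Δ₁‖ := by rw [hadef]; exact norm_add_le _ _
            _ = a + ‖Δ₁ - Δ₂‖ := by rw [norm_sub_rev]
        linarith
      have hdne : d ≠ 0 := ne_of_gt hd
      have hrw : d ^ (-(2 * (n : ℝ))) = (d ^ (2 * n))⁻¹ := rpow_neg_two_n d hd0 n
      have hnum : ‖Δ₂ ^ n - Δ₁ ^ n‖ ≤
          (n : ℝ) * (2 * a) ^ (n - 1) * (2 * B * (e * d)) := by
        have h1 := abs_pow_sub_pow_le' Δ₂ Δ₁ n (2 * a) (by rw [← hbdef2]; linarith)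
          (by rw [← hadef]; linarith)
        have h2 : ‖Δ₂ - Δ₁‖ = ‖Δ₁ - Δ₂‖ := norm_sub_rev _ _
        rw [h2] at h1
        calc ‖Δ₂ ^ n - Δ₁ ^ n‖ ≤
            (n : ℝ) * (2 * a) ^ (n - 1) * ‖Δ₁ - Δ₂‖ := h1
          _ ≤ (n : ℝ) * (2 * a) ^ (n - 1) * (2 * B * (e * d)) := by
              apply mul_le_mul_of_nonneg_left hδ (by positivity)
      obtain ⟨m, hm⟩ : ∃ m, n = m + 1 := ⟨n - 1, by omega⟩
      rw [zpow_neg, zpow_natCast, zpow_neg, zpow_natCast,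
        inv_sub_inv (pow_ne_zero n hΔ₁ne) (pow_ne_zero n hΔ₂ne),
        norm_div, norm_mul, norm_pow, norm_pow, ← hadef, ← hbdef2]
      calc ‖Δ₂ ^ n - Δ₁ ^ n‖ / (a ^ n * b ^ n)
          ≤ ((n : ℝ) * (2 * a) ^ (n - 1) * (2 * B * (e * d))) /
            (a ^ n * (3 / 4 * a) ^ n) := by
            apply div_le_div₀ (by positivity) hnum (by positivity)
            apply mul_le_mul_of_nonneg_left (pow_le_pow_left₀ (by positivity) hba1 n)
              (by positivity)
        _ = C * (d ^ (2 * n))⁻¹ * (e / d) := by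
            rw [hCdef, had, hm]
            simp only [Nat.add_sub_cancel]
            push_cast
            field_simp
            have h34 : ((3:ℝ)/4)^m * (4/3)^m = 1 := by rw [← mul_pow]; norm_num
            linear_combination (-(d ^ 4 * d ^ (m * 4) * e * 2 ^ m * 2)) * h34
        _ = C * d ^ (-(2 * (n : ℝ))) * (e / d) := by rw [hrw]
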